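/- Let G be a finite supersolvable group. Then G has a chief series with weakly decreasing indices: there exist k and a chain of subgroups 1 = N_0 ≤ N_1 ≤ ⋯ ≤ N_k = G, each normal in G, such that each index [N_{i+1} : N_i] is a prime number and [N_1 : N_0] ≥ [N_2 : N_1] ≥ ⋯ ≥ [N_k : N_{k−1}]. -/

import Mathlib

/-- A finite group is supersolvable if it has a chain of subgroups, each normal in `G`,
from `⊥` to `⊤`, with all successive quotients cyclic. -/
def IsSupersolvable (G : Type*) [Group G] : Prop :=
  ∃ (n : ℕ) (N : Fin (n + 1) → Subgroup G),
    N 0 = ⊥ ∧ N (Fin.last n) = ⊤ ∧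
    (∀ i : Fin n, N i.castSucc ≤ N i.succ) ∧
    ∃ _hn : ∀ i : Fin (n + 1), (N i).Normal,
    ∀ i : Fin n,
      haveI : ((N i.castSucc).subgroupOf (N i.succ)).Normal :=
        Subgroup.Normal.subgroupOf (_hn i.castSucc) (N i.succ)
      IsCyclic (↥(N i.succ) ⧸ (N i.castSucc).subgroupOf (N i.succ))

open Subgroup

section Helpers

variable {G : Type*} [Group G]

private lemma subgroup_eq_of_le_of_card_le [Finite G] {H K : Subgroup G} (h : H ≤ K)
    (hc : Nat.card K ≤ Nat.card H) : H = K := by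
  apply SetLike.coe_injective
  apply Set.eq_of_subset_of_ncard_le h ?_ (Set.toFinite _)
  rwa [← Nat.card_coe_set_eq, ← Nat.card_coe_set_eq]

private lemma prime_not_dvd_totient {p m : ℕ} (hp : p.Prime) (hm : m ≠ 0)
    (h : ∀ q : ℕ, q.Prime → q ∣ m → q < p) : ¬ p ∣ Nat.totient m := by
  intro hdvd
  rw [Nat.totient_eq_prod_factorization hm, Finsupp.prod] at hdvd
  obtain ⟨q, hq, hdq⟩ := (hp.prime.dvd_finset_prod_iff _).mp hdvd
  have hq' : q ∈ m.primeFactors := by rwa [← Nat.support_factorization]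
  have hqp := Nat.prime_of_mem_primeFactors hq'
  have hlt := h q hqp (Nat.dvd_of_mem_primeFactors hq')
  rcases (Nat.Prime.dvd_mul hp).mp hdq with h1 | h2
  · have := (Nat.prime_dvd_prime_iff_eq hp hqp).mp (hp.dvd_of_dvd_pow h1)
    omega
  · have h0 : 0 < q - 1 := by have := hqp.two_le; omega
    have := Nat.le_of_dvd h0 h2
    omega

private lemma exists_orderOf_eq_prime [Finite G] {p : ℕ} (hp : p.Prime)
    (hd : p ∣ Nat.card G) : ∃ g : G, orderOf g = p := by
  haveI := Fintype.ofFinite G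
  haveI := Fact.mk hp
  exact exists_prime_orderOf_dvd_card p (by rwa [← Nat.card_eq_fintype_card])

private lemma isCyclic_map_quotient {G' : Type*} [Group G'] (f : G →* G') (A B : Subgroup G)
    [h1 : (B.subgroupOf A).Normal] [h2 : ((B.map f).subgroupOf (A.map f)).Normal]
    (h : IsCyclic (A ⧸ B.subgroupOf A)) :
    IsCyclic ((A.map f) ⧸ (B.map f).subgroupOf (A.map f)) := by
  let φ : A →* (A.map f) ⧸ (B.map f).subgroupOf (A.map f) :=
    (QuotientGroup.mk' _).comp (f.subgroupMap A)
  have hker : ∀ x ∈ B.subgroupOf A, φ x = 1 := by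
    intro x hx
    have hx' : (x : G) ∈ B := hx
    simp only [φ, MonoidHom.comp_apply, QuotientGroup.mk'_apply]
    rw [QuotientGroup.eq_one_iff, mem_subgroupOf]
    exact mem_map_of_mem f hx'
  have hsurj : Function.Surjective φ :=
    (QuotientGroup.mk'_surjective _).comp (f.subgroupMap_surjective A)
  refine isCyclic_of_surjective (QuotientGroup.lift _ φ hker) ?_
  intro y
  obtain ⟨a, ha⟩ := hsurj y
  exact ⟨QuotientGroup.mk a, ha⟩

private lemma isSupersolvable_quotient (hss : IsSupersolvable G) (H : Subgroup G) [H.Normal] :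
    IsSupersolvable (G ⧸ H) := by
  obtain ⟨n, N, h0, hlast, hmono, hn, hcyc⟩ := hss
  refine ⟨n, fun i => (N i).map (QuotientGroup.mk' H),
    by show map _ (N 0) = ⊥; rw [h0]; exact map_bot _,
    by show map _ (N (Fin.last n)) = ⊤; rw [hlast];
       exact map_top_of_surjective _ (QuotientGroup.mk'_surjective H),
    fun i => map_mono (hmono i), fun i => (hn i).map _ (QuotientGroup.mk'_surjective H), ?_⟩
  intro i
  haveI := Subgroup.Normal.subgroupOf (hn i.castSucc) (N i.succ)
  haveI : ((N i.castSucc).map (QuotientGroup.mk' H)).Normal :=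
    (hn i.castSucc).map _ (QuotientGroup.mk'_surjective H)
  exact isCyclic_map_quotient (QuotientGroup.mk' H) (N i.succ) (N i.castSucc) (hcyc i)

private lemma exists_cyclic_normal_ne_bot (hss : IsSupersolvable G)
    (hG : (⊥ : Subgroup G) ≠ ⊤) :
    ∃ H : Subgroup G, H.Normal ∧ IsCyclic H ∧ H ≠ ⊥ := by
  obtain ⟨n, N, h0, hlast, hmono, hn, hcyc⟩ := hss
  have key : ∀ k : ℕ, ∀ hk : k ≤ n, N ⟨k, Nat.lt_succ_of_le hk⟩ = ⊥ ∨
      ∃ i : Fin n, N i.castSucc = ⊥ ∧ N i.succ ≠ ⊥ := by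
    intro k
    induction k with
    | zero => intro hk; left; exact h0
    | succ k ih =>
      intro hk
      rcases ih (Nat.le_of_succ_le hk) with hbot | hex
      · by_cases hb : N ⟨k + 1, Nat.lt_succ_of_le hk⟩ = ⊥
        · left; exact hb
        · right
          exact ⟨⟨k, hk⟩, hbot, hb⟩
      · right; exact hex
  rcases key n le_rfl with hbot | ⟨i, hib, his⟩
  · exact absurd (hlast ▸ hbot : (⊤ : Subgroup G) = ⊥).symm hG
  refine ⟨N i.succ, hn _, ?_, his⟩
  haveI := Subgroup.Normal.subgroupOf (hn i.castSucc) (N i.succ)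
  haveI := hcyc i
  have hker : ∀ x ∈ (N i.castSucc).subgroupOf (N i.succ), (MonoidHom.id ↥(N i.succ)) x = 1 := by
    intro x hx
    have hx' : (x : G) ∈ N i.castSucc := hx
    rw [hib] at hx'
    exact Subtype.ext (by simpa using hx')
  refine isCyclic_of_surjective (QuotientGroup.lift _ (MonoidHom.id _) hker) ?_
  intro y
  exact ⟨QuotientGroup.mk y, rfl⟩

private lemma mem_zpowers_of_pow_eq_one [Finite G] (hc : IsCyclic G) {p : ℕ} (hp : p.Prime)
    {a : G} (ha : orderOf a = p) {z : G} (hz : z ^ p = 1) : z ∈ zpowers a := by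
  haveI := Fintype.ofFinite G
  classical
  have hS := IsCyclic.card_pow_eq_one_le (α := G) (n := p) hp.pos
  set S := Finset.univ.filter (fun b : G => b ^ p = 1) with hSdef
  have hZ : ∀ y ∈ zpowers a, y ^ p = 1 := by
    intro y hy
    obtain ⟨k, rfl⟩ := hy
    have hap : a ^ p = 1 := ha ▸ pow_orderOf_eq_one a
    rw [← zpow_natCast, ← zpow_mul, mul_comm, zpow_mul, zpow_natCast, hap]
    exact one_zpow k
  have hTS : ((zpowers a : Set G).toFinset : Finset G) ⊆ S := by
    intro x hx
    rw [Set.mem_toFinset] at hx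
    simp only [hSdef, Finset.mem_filter, Finset.mem_univ, true_and]
    exact hZ x hx
  have hTcard : ((zpowers a : Set G).toFinset).card = p := by
    rw [Set.toFinset_card]
    rw [← ha, ← Nat.card_zpowers a, Nat.card_eq_fintype_card]
    rfl
  have hST : S = (zpowers a : Set G).toFinset :=
    (Finset.eq_of_subset_of_card_le hTS (by rw [hTcard]; exact hS)).symm
  have hzS : z ∈ S := by
    simp only [hSdef, Finset.mem_filter, Finset.mem_univ, true_and]; exact hz
  rw [hST, Set.mem_toFinset] at hzS
  exact hzS

private lemma exists_normal_of_dvd_card_cyclic [Finite G] {H : Subgroup G} (hn : H.Normal)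
    (hc : IsCyclic H) {p : ℕ} (hp : p.Prime) (hd : p ∣ Nat.card H) :
    ∃ P : Subgroup G, P.Normal ∧ Nat.card P = p := by
  obtain ⟨a, ha⟩ := exists_orderOf_eq_prime (G := H) hp hd
  refine ⟨(zpowers a).map H.subtype, ?_, ?_⟩
  · constructor
    intro x hx g
    obtain ⟨x', hx', rfl⟩ := hx
    have hgH : g * (H.subtype x') * g⁻¹ ∈ H := hn.conj_mem _ x'.2 g
    refine ⟨⟨_, hgH⟩, ?_, rfl⟩
    apply mem_zpowers_of_pow_eq_one hc hp ha
    apply Subtype.ext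
    have hxp : x' ^ p = 1 := by
      obtain ⟨k, rfl⟩ := hx'
      have hap : a ^ p = 1 := ha ▸ pow_orderOf_eq_one a
      rw [← zpow_natCast, ← zpow_mul, mul_comm, zpow_mul, zpow_natCast, hap]
      exact one_zpow k
    push_cast
    rw [conj_pow]
    have : (x' : G) ^ p = 1 := by
      have := congrArg (Subtype.val) hxp
      push_cast at this
      exact this
    rw [show H.subtype x' = (x' : G) from rfl, this]
    group
  · rw [← ha, ← Nat.card_zpowers a]
    exact Nat.card_congr (Subgroup.equivMapOfInjective _ _ H.subtype_injective).symm.toEquiv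

end Helpers

/-- Key lemma: a finite supersolvable group has a normal subgroup of order `p`,
where `p` is the largest prime divisor of its order. -/
private lemma exists_normal_of_max_prime :
    ∀ (n : ℕ) (G : Type u) [Group G] [Finite G], Nat.card G = n →
    IsSupersolvable G → ∀ p : ℕ, p.Prime → p ∣ Nat.card G →
    (∀ q : ℕ, q.Prime → q ∣ Nat.card G → q ≤ p) →
    ∃ P : Subgroup G, P.Normal ∧ Nat.card P = p := by
  intro n
  induction n using Nat.strong_induction_on with
  | _ n ih =>
  intro G _ _ hcard hss p hp hpd hpmax
  haveI := Fact.mk hp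
  have hcard2 : 2 ≤ Nat.card G :=
    le_trans hp.two_le (Nat.le_of_dvd Nat.card_pos hpd)
  have hbotne : (⊥ : Subgroup G) ≠ ⊤ := by
    intro hbt
    have h1 : Nat.card G = 1 := by
      rw [← card_top (G := G), ← hbt, card_bot]
    omega
  obtain ⟨H, hHn, hHc, hHb⟩ := exists_cyclic_normal_ne_bot hss hbotne
  haveI := hHn
  haveI := hHc
  set m := Nat.card H with hm
  have hmpos : 0 < m := Nat.card_pos
  have hm1 : 1 < m := by
    have hne1 : m ≠ 1 := by
      intro h
      exact hHb (Subgroup.card_eq_one.mp (hm.symm.trans h))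
    omega
  have hHdvd : m ∣ Nat.card G := ⟨H.index, H.card_mul_index.symm⟩
  by_cases hpm : p ∣ m
  · exact exists_normal_of_dvd_card_cyclic hHn hHc hp hpm
  -- p does not divide |H| : pass to the quotient
  have hcardQ : Nat.card G = Nat.card (G ⧸ H) * m :=
    Subgroup.card_eq_card_quotient_mul_card_subgroup H
  have hQpos : 0 < Nat.card (G ⧸ H) := Nat.card_pos
  have hQlt : Nat.card (G ⧸ H) < n := by
    rw [← hcard]
    nlinarith
  have hpQ : p ∣ Nat.card (G ⧸ H) := by
    rcases (Nat.Prime.dvd_mul hp).mp (hcardQ ▸ hpd) with h | h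
    · exact h
    · exact absurd h hpm
  have hQdvd : Nat.card (G ⧸ H) ∣ Nat.card G := ⟨m, hcardQ⟩
  obtain ⟨K', hK'n, hK'card⟩ := ih (Nat.card (G ⧸ H)) hQlt (G ⧸ H) rfl
    (isSupersolvable_quotient hss H) p hp hpQ
    (fun q hq hqd => hpmax q hq (hqd.trans hQdvd))
  haveI := hK'n
  set π := QuotientGroup.mk' H with hπ
  set K := comap π K' with hK
  haveI hKn : K.Normal := hK'n.comap π
  have hmapK : map π K = K' :=
    Subgroup.map_comap_eq_self_of_surjective (QuotientGroup.mk'_surjective H) K'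
  -- find an element of order p in K
  obtain ⟨x', hx'⟩ := exists_orderOf_eq_prime (G := K') hp (hK'card ▸ dvd_refl p)
  obtain ⟨x₀, hx₀⟩ := QuotientGroup.mk'_surjective H (x' : G ⧸ H)
  have hx₀K : x₀ ∈ K := by
    rw [hK, mem_comap, hx₀]
    exact x'.2
  have hpord : p ∣ orderOf x₀ := by
    have h1 : orderOf (π x₀) ∣ orderOf x₀ := orderOf_map_dvd π x₀
    rw [hx₀, Subgroup.orderOf_coe, hx'] at h1
    exact h1
  have hord0 : orderOf x₀ ≠ 0 := (orderOf_pos x₀).ne'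
  set s := orderOf x₀ / p with hs
  have hps : orderOf x₀ = p * s := (Nat.mul_div_cancel' hpord).symm
  have hs0 : s ≠ 0 := by
    intro h
    rw [h, mul_zero] at hps
    exact hord0 hps
  set x := x₀ ^ s with hxdef
  have hxp1 : x ^ p = 1 := by
    rw [hxdef, ← pow_mul, mul_comm, ← hps, pow_orderOf_eq_one]
  have hxne : x ≠ 1 := by
    intro h
    have : orderOf x₀ ∣ s := orderOf_dvd_of_pow_eq_one (hxdef ▸ h)
    have hle := Nat.le_of_dvd (Nat.pos_of_ne_zero hs0) this
    rw [hps] at hle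
    have hs1 : 1 ≤ s := Nat.pos_of_ne_zero hs0
    have := hp.two_le
    nlinarith
  have hx : orderOf x = p := orderOf_eq_prime hxp1 hxne
  have hxK : x ∈ K := pow_mem hx₀K s
  -- any element of order p centralizes H
  have hcent : ∀ z : G, orderOf z = p → ∀ h ∈ H, z * h * z⁻¹ = h := by
    intro z hz h hh
    have h1 : orderOf (MulAut.conjNormal (H := H) z) ∣ p :=
      hz ▸ orderOf_map_dvd (MulAut.conjNormal (H := H)) z
    have h2 : orderOf (MulAut.conjNormal (H := H) z) ∣ Nat.card (MulAut H) :=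
      orderOf_dvd_natCard _
    rw [IsCyclic.card_mulAut] at h2
    have hnd : ¬ p ∣ Nat.totient m :=
      prime_not_dvd_totient hp hmpos.ne' (fun q hq hqm =>
        lt_of_le_of_ne (hpmax q hq (hqm.trans hHdvd)) (fun he => hpm (he ▸ hqm)))
    have hord1 : orderOf (MulAut.conjNormal (H := H) z) = 1 := by
      rcases (Nat.dvd_prime hp).mp h1 with h | h
      · exact h
      · exact absurd (h ▸ h2) hnd
    have heq : MulAut.conjNormal (H := H) z = 1 := orderOf_eq_one_iff.mp hord1
    have := congrArg (fun e : MulAut H => ((e ⟨h, hh⟩ : H) : G)) heq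
    simpa [MulAut.conjNormal_apply] using this
  -- every element of K of order p lies in zpowers x
  have hC : ∀ z, z ∈ K → orderOf z = p → z ∈ zpowers x := by
    intro z hzK hz
    have hπxK' : π x ∈ K' := mem_comap.mp hxK
    have hπx : orderOf (π x) = p := by
      have hdvd : orderOf (π x) ∣ p := hx ▸ orderOf_map_dvd π x
      rcases (Nat.dvd_prime hp).mp hdvd with h | h
      · exfalso
        have hx1 : π x = 1 := orderOf_eq_one_iff.mp h
        have hxH : x ∈ H := by
          rw [← QuotientGroup.ker_mk' H]
          exact hx1
        have := Subgroup.orderOf_dvd_natCard H hxH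
        rw [hx] at this
        exact hpm this
      · exact h
    have hzpK' : zpowers (π x) = K' := by
      apply subgroup_eq_of_le_of_card_le (zpowers_le.mpr hπxK')
      rw [Nat.card_zpowers, hπx, hK'card]
    have hπz : π z ∈ zpowers (π x) := by
      rw [hzpK']
      exact mem_comap.mp hzK
    obtain ⟨j, hj⟩ := hπz
    simp only at hj
    have haH : (x ^ j)⁻¹ * z ∈ H := by
      rw [← QuotientGroup.ker_mk' H]
      have : π ((x ^ j)⁻¹ * z) = 1 := by
        rw [map_mul, map_inv, map_zpow, hj, inv_mul_cancel]
      exact this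
    set a := (x ^ j)⁻¹ * z with hadef
    have hza : z = x ^ j * a := by rw [hadef]; group
    have hxa : Commute x a := by
      have h' := hcent x hx a haH
      exact mul_inv_eq_iff_eq_mul.mp h'
    have hcomm : Commute (x ^ j) a := hxa.zpow_left j
    have horda : orderOf a ∣ m := Subgroup.orderOf_dvd_natCard H haH
    have hordxj : orderOf (x ^ j) ∣ p := by
      have h1 : x ^ j ∈ zpowers x := zpow_mem (mem_zpowers x) j
      have := Subgroup.orderOf_dvd_natCard (zpowers x) h1
      rwa [Nat.card_zpowers, hx] at this
    have hpc : Nat.Coprime p m := (Nat.Prime.coprime_iff_not_dvd hp).mpr hpm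
    have hcop : Nat.Coprime (orderOf (x ^ j)) (orderOf a) :=
      Nat.Coprime.coprime_dvd_left hordxj (Nat.Coprime.coprime_dvd_right horda hpc)
    have hmul : orderOf z = orderOf (x ^ j) * orderOf a := by
      rw [hza]
      exact Commute.orderOf_mul_eq_mul_orderOf_of_coprime hcomm hcop
    have ha1 : orderOf a = 1 := by
      have hd1 : orderOf a ∣ p := ⟨orderOf (x ^ j), by rw [← hz, hmul, mul_comm]⟩
      rcases (Nat.dvd_prime hp).mp hd1 with h | h
      · exact h
      · exact absurd (h ▸ horda) hpm
    have ha : a = 1 := orderOf_eq_one_iff.mp ha1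
    rw [hza, ha, mul_one]
    exact zpow_mem (mem_zpowers x) j
  refine ⟨zpowers x, ?_, by rw [Nat.card_zpowers, hx]⟩
  constructor
  intro nelem hne g
  by_cases h1 : nelem = 1
  · rw [h1]
    simpa using one_mem (zpowers x)
  · have hnK : nelem ∈ K := zpowers_le.mpr hxK hne
    have hno : orderOf nelem = p := by
      have hdvd : orderOf nelem ∣ p := by
        have := Subgroup.orderOf_dvd_natCard (zpowers x) hne
        rwa [Nat.card_zpowers, hx] at this
      rcases (Nat.dvd_prime hp).mp hdvd with h | h
      · exact absurd (orderOf_eq_one_iff.mp h) h1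
      · exact h
    have hKmem : g * nelem * g⁻¹ ∈ K := hKn.conj_mem _ hnK g
    have hordc : orderOf (g * nelem * g⁻¹) = p := by
      have hsc : SemiconjBy g nelem (g * nelem * g⁻¹) := by
        unfold SemiconjBy; group
      rw [← SemiconjBy.orderOf_eq g hsc, hno]
    exact hC _ hKmem hordc

private lemma zappa_aux :
    ∀ (n : ℕ) (G : Type u) [Group G] [Finite G], Nat.card G = n →
    IsSupersolvable G →
    ∃ (kk : ℕ) (N : Fin (kk + 1) → Subgroup G),
      N 0 = ⊥ ∧ N (Fin.last kk) = ⊤ ∧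
      (∀ i : Fin kk, N i.castSucc ≤ N i.succ) ∧
      (∀ i : Fin (kk + 1), (N i).Normal) ∧
      (∀ i : Fin kk, ((N i.castSucc).relIndex (N i.succ)).Prime) ∧
      ∀ i j : Fin kk, i ≤ j →
        (N j.castSucc).relIndex (N j.succ) ≤ (N i.castSucc).relIndex (N i.succ) := by
  intro n
  induction n using Nat.strong_induction_on with
  | _ n ih =>
  intro G _ _ hcard hss
  by_cases htriv : Nat.card G = 1
  · haveI : Subsingleton G := (Nat.card_eq_one_iff_unique.mp htriv).1
    have hbt : (⊥ : Subgroup G) = ⊤ := by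
      ext x
      simp [Subsingleton.elim x 1]
    exact ⟨0, fun _ => ⊥, rfl, hbt, fun i => i.elim0, fun _ => inferInstance,
      fun i => i.elim0, fun i => i.elim0⟩
  · have hc1 : 1 < Nat.card G := by
      have := Nat.card_pos (α := G)
      omega
    have hne : (Nat.card G).primeFactors.Nonempty := Nat.nonempty_primeFactors.mpr hc1
    set p := (Nat.card G).primeFactors.max' hne with hpdef
    have hpmem := (Nat.card G).primeFactors.max'_mem hne
    have hp : p.Prime := Nat.prime_of_mem_primeFactors hpmem
    have hpd : p ∣ Nat.card G := Nat.dvd_of_mem_primeFactors hpmem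
    have hpmax : ∀ q, q.Prime → q ∣ Nat.card G → q ≤ p := fun q hq hqd =>
      Finset.le_max' _ q (Nat.mem_primeFactors.mpr ⟨hq, hqd, by omega⟩)
    obtain ⟨P, hPn, hPcard⟩ := exists_normal_of_max_prime (Nat.card G) G rfl hss p hp hpd hpmax
    haveI := hPn
    set π := QuotientGroup.mk' P with hπdef
    have hcards : Nat.card G = Nat.card (G ⧸ P) * p := by
      rw [Subgroup.card_eq_card_quotient_mul_card_subgroup P, hPcard]
    have hQlt : Nat.card (G ⧸ P) < n := by
      have h2 := hp.two_le
      have h3 := Nat.card_pos (α := G ⧸ P)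
      rw [← hcard]
      nlinarith
    obtain ⟨kk, M, hM0, hMlast, hMmono, hMnorm, hMprime, hMdec⟩ :=
      ih (Nat.card (G ⧸ P)) hQlt (G ⧸ P) rfl (isSupersolvable_quotient hss P)
    set N : Fin (kk + 1 + 1) → Subgroup G := Fin.cases ⊥ (fun i => comap π (M i)) with hN
    have hNsucc : ∀ i : Fin (kk + 1), N i.succ = comap π (M i) := fun i => by
      simp [hN]
    have hNcs : ∀ j : Fin kk, N j.succ.castSucc = comap π (M j.castSucc) := fun j => by
      rw [← Fin.succ_castSucc]
      simp [hN]
    have hN00 : N (0 : Fin (kk + 1)).castSucc = ⊥ := by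
      simp [hN]
    have hE0 : (N (0 : Fin (kk + 1)).castSucc).relIndex (N (0 : Fin (kk + 1)).succ) = p := by
      rw [hN00, hNsucc, hM0, MonoidHom.comap_bot,
        show π.ker = P from QuotientGroup.ker_mk' P, relIndex_bot_left, hPcard]
    have hEsucc : ∀ j : Fin kk,
        (N j.succ.castSucc).relIndex (N j.succ.succ) =
          (M j.castSucc).relIndex (M j.succ) := by
      intro j
      rw [hNcs, hNsucc, relIndex_comap,
        Subgroup.map_comap_eq_self_of_surjective (QuotientGroup.mk'_surjective P)]
    have hle_p : ∀ j : Fin kk, (M j.castSucc).relIndex (M j.succ) ≤ p := by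
      intro j
      apply hpmax _ (hMprime j)
      have h1 : (M j.castSucc).relIndex (M j.succ) ∣ Nat.card (M j.succ) :=
        Subgroup.index_dvd_card ((M j.castSucc).subgroupOf (M j.succ))
      have h2 : Nat.card (M j.succ) ∣ Nat.card (G ⧸ P) :=
        ⟨(M j.succ).index, (M j.succ).card_mul_index.symm⟩
      exact (h1.trans h2).trans ⟨p, hcards⟩
    refine ⟨kk + 1, N, by simp [hN], ?_, ?_, ?_, ?_, ?_⟩
    · rw [← Fin.succ_last, hNsucc, hMlast, comap_top]
    · intro i
      rcases Fin.eq_zero_or_eq_succ i with rfl | ⟨j, rfl⟩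
      · rw [hN00]
        exact bot_le
      · rw [hNcs, hNsucc]
        exact comap_mono (hMmono j)
    · intro i
      refine Fin.cases ?_ (fun j => ?_) i
      · simpa [hN] using (inferInstance : (⊥ : Subgroup G).Normal)
      · have : N (Fin.succ j) = comap π (M j) := hNsucc j
        rw [this]
        exact (hMnorm j).comap π
    · intro i
      rcases Fin.eq_zero_or_eq_succ i with rfl | ⟨j, rfl⟩
      · rw [hE0]; exact hp
      · rw [hEsucc]; exact hMprime j
    · intro i j hij
      rcases Fin.eq_zero_or_eq_succ j with rfl | ⟨j', rfl⟩
      · rw [Fin.le_zero_iff.mp hij]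
      · rcases Fin.eq_zero_or_eq_succ i with rfl | ⟨i', rfl⟩
        · rw [hEsucc, hE0]
          exact hle_p j'
        · rw [hEsucc, hEsucc]
          exact hMdec i' j' (Fin.succ_le_succ_iff.mp hij)

/-- (Zappa) A finite supersolvable group has a chief series with weakly decreasing
prime indices. -/
theorem exists_chief_series_decreasing_indices
    (G : Type*) [Group G] [Finite G] (hss : IsSupersolvable G) :
    ∃ (kk : ℕ) (N : Fin (kk + 1) → Subgroup G),
      N 0 = ⊥ ∧ N (Fin.last kk) = ⊤ ∧
      (∀ i : Fin kk, N i.castSucc ≤ N i.succ) ∧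
      (∀ i : Fin (kk + 1), (N i).Normal) ∧
      (∀ i : Fin kk, ((N i.castSucc).relIndex (N i.succ)).Prime) ∧
      ∀ i j : Fin kk, i ≤ j →
        (N j.castSucc).relIndex (N j.succ) ≤ (N i.castSucc).relIndex (N i.succ) := by
  exact zappa_aux (Nat.card G) G rfl hss
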